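/- arXiv:1510.00403 — 2 statements merged into one kernel-verified Lean document; each statement's English description precedes it below -/
import Mathlib

section
/- Let P̂, Q̂ ∈ R³ and S̄_f > 0, and let Σ = √((1ᵀP̂)² + (1ᵀQ̂)²). Then the minimizer of ‖P − P̂‖² + ‖Q − Q̂‖² over P, Q ∈ R³ subject to (1ᵀP)² + (1ᵀQ)² ≤ S̄_f² is given by P* = P̂ − max{1 − S̄_f/Σ, 0}·(11ᵀP̂)/3 and Q* = Q̂ − max{1 − S̄_f/Σ, 0}·(11ᵀQ̂)/3 (when Σ > 0; if Σ ≤ S̄_f the minimizer is (P̂, Q̂)). -/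
lemma cs2 (a b p q : ℝ) :
    a*p + b*q ≤ Real.sqrt (a^2+b^2) * Real.sqrt (p^2+q^2) := by
  have h3 : (a*p+b*q)^2 ≤ (a^2+b^2)*(p^2+q^2) := by nlinarith [sq_nonneg (a*q - b*p)]
  calc a*p+b*q ≤ |a*p+b*q| := le_abs_self _
    _ = Real.sqrt ((a*p+b*q)^2) := (Real.sqrt_sq_eq_abs _).symm
    _ ≤ Real.sqrt ((a^2+b^2)*(p^2+q^2)) := Real.sqrt_le_sqrt h3
    _ = Real.sqrt (a^2+b^2) * Real.sqrt (p^2+q^2) := Real.sqrt_mul (by positivity) _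

lemma dist_lb (a b p q Sf Sig s : ℝ) (hSig2 : Sig ^ 2 = p ^ 2 + q ^ 2)
    (hs2 : s ^ 2 = a ^ 2 + b ^ 2) (hcs : a * p + b * q ≤ s * Sig)
    (hsSf : s ≤ Sf) (hSfSig : Sf ≤ Sig) :
    (Sig - Sf) ^ 2 ≤ (a - p) ^ 2 + (b - q) ^ 2 := by
  have h1 : (Sig - s) ^ 2 ≤ (a - p) ^ 2 + (b - q) ^ 2 := by nlinarith
  have h2 : (Sig - Sf) ^ 2 ≤ (Sig - s) ^ 2 := by nlinarith
  linarith

lemma cauchy3 (x0 x1 x2 : ℝ) : (x0 + x1 + x2) ^ 2 / 3 ≤ x0 ^ 2 + x1 ^ 2 + x2 ^ 2 := by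
  nlinarith [sq_nonneg (x0 - x1), sq_nonneg (x0 - x2), sq_nonneg (x1 - x2)]

set_option maxHeartbeats 1600000 in
/-- Proposition 1: projection onto the feeder-capacity constraint set. -/
theorem substation_projection {Phat Qhat : Fin 3 → ℝ} {Sf : ℝ} (hSf : 0 < Sf)
    (Sig : ℝ) (hSig : Sig = Real.sqrt ((∑ i, Phat i) ^ 2 + (∑ i, Qhat i) ^ 2))
    (hSigpos : 0 < Sig)
    (Pstar Qstar : Fin 3 → ℝ)
    (hP : ∀ i, Pstar i = Phat i - max (1 - Sf / Sig) 0 * (∑ j, Phat j) / 3)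
    (hQ : ∀ i, Qstar i = Qhat i - max (1 - Sf / Sig) 0 * (∑ j, Qhat j) / 3) :
    ((∑ i, Pstar i) ^ 2 + (∑ i, Qstar i) ^ 2 ≤ Sf ^ 2) ∧
    (∀ P Q : Fin 3 → ℝ, (∑ i, P i) ^ 2 + (∑ i, Q i) ^ 2 ≤ Sf ^ 2 →
      ∑ i, (Pstar i - Phat i) ^ 2 + ∑ i, (Qstar i - Qhat i) ^ 2 ≤
        ∑ i, (P i - Phat i) ^ 2 + ∑ i, (Q i - Qhat i) ^ 2) ∧
    (Sig ≤ Sf → Pstar = Phat ∧ Qstar = Qhat) := by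
  set p : ℝ := ∑ i, Phat i with hpdef
  set q : ℝ := ∑ i, Qhat i with hqdef
  have hSig2 : Sig ^ 2 = p ^ 2 + q ^ 2 := by
    rw [hSig]; exact Real.sq_sqrt (by positivity)
  by_cases hcase : Sig ≤ Sf
  · -- max = 0
    have hone : 1 ≤ Sf / Sig := (one_le_div hSigpos).mpr hcase
    have hmax : max (1 - Sf / Sig) 0 = 0 := max_eq_right (by linarith)
    have hPeq : Pstar = Phat := by
      funext i; rw [hP i, hmax]; ring
    have hQeq : Qstar = Qhat := by
      funext i; rw [hQ i, hmax]; ring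
    refine ⟨?_, ?_, fun _ => ⟨hPeq, hQeq⟩⟩
    · rw [hPeq, hQeq, ← hpdef, ← hqdef, ← hSig2]
      have : 0 ≤ Sig := hSigpos.le
      nlinarith
    · intro P Q _
      rw [hPeq, hQeq]
      have h0 : ∑ i, (Phat i - Phat i) ^ 2 + ∑ i, (Qhat i - Qhat i) ^ 2 = 0 := by simp
      rw [h0]
      positivity
  · push_neg at hcase
    have hone : Sf / Sig < 1 := (div_lt_one hSigpos).mpr hcase
    have hmax : max (1 - Sf / Sig) 0 = 1 - Sf / Sig := max_eq_left (by linarith)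
    set t : ℝ := 1 - Sf / Sig with htdef
    have htSig : t * Sig = Sig - Sf := by
      rw [htdef, sub_mul, one_mul, div_mul_cancel₀ Sf (ne_of_gt hSigpos)]
    have hsumP : (∑ i, Pstar i) = p - t * p := by
      simp only [Fin.sum_univ_three, hP, hmax, hpdef]
      ring
    have hsumQ : (∑ i, Qstar i) = q - t * q := by
      simp only [Fin.sum_univ_three, hQ, hmax, hqdef]
      ring
    have hfrac : 1 - t = Sf / Sig := by rw [htdef]; ring
    have hSigne : Sig ≠ 0 := ne_of_gt hSigpos
    have hconstr : (∑ i, Pstar i) ^ 2 + (∑ i, Qstar i) ^ 2 = Sf ^ 2 := by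
      rw [hsumP, hsumQ]
      have : p - t * p = Sf / Sig * p := by rw [← hfrac]; ring
      have h2 : q - t * q = Sf / Sig * q := by rw [← hfrac]; ring
      rw [this, h2]
      field_simp
      nlinarith [hSig2]
    refine ⟨le_of_eq hconstr, ?_, fun h => absurd h (not_le.mpr hcase)⟩
    intro P Q hPQ
    set a : ℝ := ∑ i, P i with hadef
    set b : ℝ := ∑ i, Q i with hbdef
    -- LHS = (Sig - Sf)^2 / 3
    have hLHS : ∑ i, (Pstar i - Phat i) ^ 2 + ∑ i, (Qstar i - Qhat i) ^ 2
        = t ^ 2 * (p ^ 2 + q ^ 2) / 3 := by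
      simp only [Fin.sum_univ_three, hP, hQ, hmax, ← htdef, hpdef, hqdef]
      ring
    have hLHS2 : t ^ 2 * (p ^ 2 + q ^ 2) / 3 = (Sig - Sf) ^ 2 / 3 := by
      rw [← hSig2, ← htSig]; ring
    -- sqrt(a²+b²) ≤ Sf
    have hs : Real.sqrt (a ^ 2 + b ^ 2) ≤ Sf := by
      rw [show Sf = Real.sqrt (Sf ^ 2) from (Real.sqrt_sq hSf.le).symm]
      exact Real.sqrt_le_sqrt hPQ
    set s : ℝ := Real.sqrt (a ^ 2 + b ^ 2) with hsdef
    have hs2 : s ^ 2 = a ^ 2 + b ^ 2 := Real.sq_sqrt (by positivity)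
    have hsnn : 0 ≤ s := Real.sqrt_nonneg _
    have hcsab : a * p + b * q ≤ s * Sig := by
      rw [hsdef, hSig]; exact cs2 a b p q
    -- (a-p)² + (b-q)² ≥ (Sig - Sf)²
    have hkey : (Sig - Sf) ^ 2 ≤ (a - p) ^ 2 + (b - q) ^ 2 :=
      dist_lb a b p q Sf Sig s hSig2 hs2 hcsab hs hcase.le
    -- Cauchy for sums of 3
    have hC1 : (a - p) ^ 2 / 3 ≤ ∑ i, (P i - Phat i) ^ 2 := by
      have := cauchy3 (P 0 - Phat 0) (P 1 - Phat 1) (P 2 - Phat 2)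
      simp only [Fin.sum_univ_three, hadef, hpdef]
      calc ((P 0 + P 1 + P 2) - (Phat 0 + Phat 1 + Phat 2)) ^ 2 / 3
          = ((P 0 - Phat 0) + (P 1 - Phat 1) + (P 2 - Phat 2)) ^ 2 / 3 := by ring
        _ ≤ _ := this
    have hC2 : (b - q) ^ 2 / 3 ≤ ∑ i, (Q i - Qhat i) ^ 2 := by
      have := cauchy3 (Q 0 - Qhat 0) (Q 1 - Qhat 1) (Q 2 - Qhat 2)
      simp only [Fin.sum_univ_three, hbdef, hqdef]
      calc ((Q 0 + Q 1 + Q 2) - (Qhat 0 + Qhat 1 + Qhat 2)) ^ 2 / 3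
          = ((Q 0 - Qhat 0) + (Q 1 - Qhat 1) + (Q 2 - Qhat 2)) ^ 2 / 3 := by ring
        _ ≤ _ := this
    rw [hLHS, hLHS2]
    linarith
end

section
/- Let Σ = √((1ᵀP̂)² + (1ᵀQ̂)²) with Σ > S̄_f > 0, and define ν* = (Σ/S̄_f − 1)/3 > 0. Then the vectors P* = P̂ − (3ν*/(1+3ν*))·(11ᵀP̂)/3 and Q* = Q̂ − (3ν*/(1+3ν*))·(11ᵀQ̂)/3 satisfy the stationarity conditions P* − P̂ + ν*·11ᵀP* = 0 and Q* − Q̂ + ν*·11ᵀQ* = 0, together with (1ᵀP*)² + (1ᵀQ*)² = S̄_f². -/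
/-- KKT conditions for the substation projection in the active-constraint
case. -/
theorem substation_projection_kkt {Phat Qhat : Fin 3 → ℝ} {Sf Sig : ℝ}
    (hSf : 0 < Sf)
    (hSig : Sig = Real.sqrt ((∑ i, Phat i) ^ 2 + (∑ i, Qhat i) ^ 2))
    (hact : Sf < Sig)
    (ν : ℝ) (hν : ν = (Sig / Sf - 1) / 3)
    (Pstar Qstar : Fin 3 → ℝ)
    (hP : ∀ i, Pstar i = Phat i - (3 * ν / (1 + 3 * ν)) * (∑ j, Phat j) / 3)
    (hQ : ∀ i, Qstar i = Qhat i - (3 * ν / (1 + 3 * ν)) * (∑ j, Qhat j) / 3) :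
    0 < ν ∧
    (∀ i, Pstar i - Phat i + ν * (∑ j, Pstar j) = 0) ∧
    (∀ i, Qstar i - Qhat i + ν * (∑ j, Qstar j) = 0) ∧
    (∑ i, Pstar i) ^ 2 + (∑ i, Qstar i) ^ 2 = Sf ^ 2 := by
  have hν0 : 0 < ν := by
    rw [hν]
    have : 1 < Sig / Sf := (one_lt_div hSf).mpr hact
    linarith
  have hden : 1 + 3 * ν = Sig / Sf := by rw [hν]; ring
  have hdne : (1 : ℝ) + 3 * ν ≠ 0 := by positivity
  have hSig2 : Sig ^ 2 = (∑ i, Phat i) ^ 2 + (∑ i, Qhat i) ^ 2 := by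
    rw [hSig]; exact Real.sq_sqrt (by positivity)
  have hsP : ∑ j, Pstar j = (∑ j, Phat j) / (1 + 3 * ν) := by
    simp only [Fin.sum_univ_three, hP]
    field_simp
    ring
  have hsQ : ∑ j, Qstar j = (∑ j, Qhat j) / (1 + 3 * ν) := by
    simp only [Fin.sum_univ_three, hQ]
    field_simp
    ring
  refine ⟨hν0, fun i => ?_, fun i => ?_, ?_⟩
  · rw [hP i, hsP]; field_simp; ring
  · rw [hQ i, hsQ]; field_simp; ring
  · rw [hsP, hsQ, div_pow, div_pow, ← add_div, ← hSig2, hden]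
    have hS0 : Sig ≠ 0 := by linarith
    rw [div_pow]
    field_simp
end
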